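/- For the map τ on [0,1] given by τ(x) = 2x/(1−x) for 0 ≤ x ≤ 1/3 and τ(x) = (1−x)/(2x) for 1/3 < x ≤ 1, the function f*(x) = 2/(1+x)² is an invariant density: f* ≥ 0, ∫₀¹ f* dλ = 1, and (𝓛_τ f*)(x) = f*(x) for all x, where 𝓛_τ is the transfer operator of τ. -/

import Mathlib

/-- The eventually expanding Markov map `τ(x) = 2x/(1−x)` on `[0,1/3]` and
`τ(x) = (1−x)/(2x)` on `(1/3,1]`. -/
noncomputable def tauMap (x : ℝ) : ℝ :=
  if x ≤ 1 / 3 then 2 * x / (1 - x) else (1 - x) / (2 * x)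

/-- The transfer operator of `tauMap`, written via its two inverse branches
`y₁(x) = x/(x+2)` and `y₂(x) = 1/(1+2x)` with derivative factors
`1/|τ'(y₁)| = (1−y₁)²/2` and `1/|τ'(y₂)| = 2 y₂²`. -/
noncomputable def transferTau (f : ℝ → ℝ) (x : ℝ) : ℝ :=
  f (x / (x + 2)) * ((1 - x / (x + 2)) ^ 2 / 2)
    + f (1 / (1 + 2 * x)) * (2 * (1 / (1 + 2 * x)) ^ 2)

/-- `f*(x) = 2/(1+x)²` is an invariant density for `tauMap`:
the inverse branches are genuine preimages, `f* ≥ 0`, `∫₀¹ f* = 1`, and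
`𝓛_τ f* = f*` pointwise on `[0,1]`. -/
theorem stmt_19 :
    (∀ x ∈ Set.Icc (0:ℝ) 1,
        tauMap (x / (x + 2)) = x ∧ tauMap (1 / (1 + 2 * x)) = x) ∧
    (∀ x ∈ Set.Icc (0:ℝ) 1, 0 ≤ 2 / (1 + x) ^ 2) ∧
    (∫ x in (0:ℝ)..1, 2 / (1 + x) ^ 2) = 1 ∧
    (∀ x ∈ Set.Icc (0:ℝ) 1,
      transferTau (fun y => 2 / (1 + y) ^ 2) x = 2 / (1 + x) ^ 2) := by
  refine ⟨?_, ?_, ?_, ?_⟩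
  · rintro x ⟨hx0, hx1⟩
    have h2 : (0:ℝ) < x + 2 := by linarith
    have h12 : (0:ℝ) < 1 + 2 * x := by linarith
    constructor
    · have hle : x / (x + 2) ≤ 1 / 3 := by
        rw [div_le_div_iff₀ h2 (by norm_num)]; linarith
      rw [tauMap, if_pos hle]
      have hne : 1 - x / (x + 2) ≠ 0 := by
        have : 1 - x / (x + 2) = 2 / (x + 2) := by field_simp; ring
        rw [this]; positivity
      rw [eq_comm, eq_div_iff hne]
      field_simp
      ring
    · rcases lt_or_ge x 1 with hlt | hge
      · have hgt : ¬ (1 / (1 + 2 * x) ≤ 1 / 3) := by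
          rw [not_le, div_lt_div_iff₀ (by norm_num) h12]; linarith
        rw [tauMap, if_neg hgt]
        rw [eq_comm, eq_div_iff (by positivity)]
        field_simp; ring
      · have hx : x = 1 := le_antisymm hx1 hge
        subst hx
        norm_num [tauMap]
  · rintro x ⟨hx0, hx1⟩; positivity
  · have key : ∀ x ∈ Set.uIcc (0:ℝ) 1,
        HasDerivAt (fun y : ℝ => -2 / (1 + y)) (2 / (1 + x) ^ 2) x := by
      intro x hx
      rw [Set.uIcc_of_le (by norm_num)] at hx
      have hne : (1 : ℝ) + x ≠ 0 := by have := hx.1; intro h; linarith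
      have h1 : HasDerivAt (fun y : ℝ => 1 + y) 1 x :=
        (hasDerivAt_id x).const_add 1
      have hd := (hasDerivAt_const x (-2 : ℝ)).div h1 hne
      refine HasDerivAt.congr_deriv hd ?_
      rw [div_eq_div_iff (by positivity) (by positivity)]
      ring
    rw [intervalIntegral.integral_eq_sub_of_hasDerivAt key ?_]
    · norm_num
    · apply ContinuousOn.intervalIntegrable
      apply ContinuousOn.div continuousOn_const (by fun_prop)
      intro x hx
      rw [Set.uIcc_of_le (by norm_num)] at hx
      have : (0:ℝ) < 1 + x := by have := hx.1; linarith
      positivity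
  · rintro x ⟨hx0, hx1⟩
    have h2 : (x:ℝ) + 2 ≠ 0 := by intro h; linarith
    have h12 : (1:ℝ) + 2 * x ≠ 0 := by intro h; linarith
    have h1 : (1:ℝ) + x ≠ 0 := by intro h; linarith
    rw [transferTau]
    field_simp
    ring
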